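/- (Adaptive FSAI update) Let A be s.p.d. with block structure, F the FSAI matrix for pattern 𝒫, k a block row, and c ∉ 𝒫_k with c < k. Let F^{(c)} be the FSAI matrix for the pattern 𝒫 ∪ {(k,c)} and W_c := A_{cc} − A[{c},𝒫̃_k] A[𝒫̃_k,𝒫̃_k]⁻¹ A[𝒫̃_k,{c}]. Then (F^{(c)} A F^{(c)ᵀ})_{kk} = (F A Fᵀ)_{kk} − (FA)_{kc} W_c⁻¹ (FA)_{kc}ᵀ. -/

import Mathlib

open Matrix

/-- Scalar index type for a block structure with `n` blocks of sizes `m i`. -/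
abbrev BIdx {n : ℕ} (m : Fin n → ℕ) := (i : Fin n) × Fin (m i)

/-- The `(i,j)` block of a block-structured matrix. -/
def blk {n : ℕ} {m : Fin n → ℕ} (A : Matrix (BIdx m) (BIdx m) ℝ) (i j : Fin n) :
    Matrix (Fin (m i)) (Fin (m j)) ℝ :=
  fun a b => A ⟨i, a⟩ ⟨j, b⟩

/-- The block-diagonal part `diag_𝔅(A)` of a block-structured matrix. -/
def bdiag {n : ℕ} {m : Fin n → ℕ} (A : Matrix (BIdx m) (BIdx m) ℝ) :
    Matrix (BIdx m) (BIdx m) ℝ :=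
  fun p q => if p.1 = q.1 then A p q else 0

/-- The block submatrix `A[S, T]` with block-row indices in `S` and block-column indices in `T`. -/
def subM {n : ℕ} {m : Fin n → ℕ} (A : Matrix (BIdx m) (BIdx m) ℝ) (S T : Finset (Fin n)) :
    Matrix {p : BIdx m // p.1 ∈ S} {q : BIdx m // q.1 ∈ T} ℝ :=
  fun p q => A p.val q.val

/-- The block row submatrix `A[{i}, T]`. -/
def rowM {n : ℕ} {m : Fin n → ℕ} (A : Matrix (BIdx m) (BIdx m) ℝ) (i : Fin n)
    (T : Finset (Fin n)) : Matrix (Fin (m i)) {q : BIdx m // q.1 ∈ T} ℝ :=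
  fun a q => A ⟨i, a⟩ q.val

/-- The block column submatrix `A[S, {i}]`. -/
def colM {n : ℕ} {m : Fin n → ℕ} (A : Matrix (BIdx m) (BIdx m) ℝ) (S : Finset (Fin n))
    (i : Fin n) : Matrix {p : BIdx m // p.1 ∈ S} (Fin (m i)) ℝ :=
  fun p a => A p.val ⟨i, a⟩

/-- A block sparsity pattern, given by its rows `P i ⊆ {1,…,n}`, is lower triangular and
contains the diagonal. -/
def IsLowerPattern {n : ℕ} (P : Fin n → Finset (Fin n)) : Prop :=
  (∀ i, i ∈ P i) ∧ ∀ i j, j ∈ P i → j ≤ i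

/-- `F` is the block-FSAI matrix for `A` based on the pattern `P`: identity diagonal blocks,
zero blocks outside the pattern, and `F[{i}, 𝒫̃ᵢ] = -A[{i}, 𝒫̃ᵢ] A[𝒫̃ᵢ, 𝒫̃ᵢ]⁻¹`
where `𝒫̃ᵢ = Pᵢ \ {i}`. -/
def IsFSAI {n : ℕ} {m : Fin n → ℕ} (A F : Matrix (BIdx m) (BIdx m) ℝ)
    (P : Fin n → Finset (Fin n)) : Prop :=
  (∀ i, blk F i i = 1) ∧
  (∀ p q : BIdx m, p.1 ≠ q.1 → q.1 ∉ P p.1 → F p q = 0) ∧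
  (∀ i, rowM F i ((P i).erase i) =
    -(rowM A i ((P i).erase i)) * (subM A ((P i).erase i) ((P i).erase i))⁻¹)

/-- `S` is the block-diagonal FSAI Schur-complement matrix:
`S_{ii} = A_{ii} - A[{i}, 𝒫̃ᵢ] A[𝒫̃ᵢ, 𝒫̃ᵢ]⁻¹ A[𝒫̃ᵢ, {i}]`. -/
def IsFSAISchur {n : ℕ} {m : Fin n → ℕ} (A S : Matrix (BIdx m) (BIdx m) ℝ)
    (P : Fin n → Finset (Fin n)) : Prop :=
  (∀ p q : BIdx m, p.1 ≠ q.1 → S p q = 0) ∧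
  (∀ i, blk S i i =
    blk A i i - rowM A i ((P i).erase i) * (subM A ((P i).erase i) ((P i).erase i))⁻¹ *
      colM A ((P i).erase i) i)

/-- Positive definiteness is inherited by submatrices along injective maps. -/
lemma posDef_submatrix_inj {ι κ : Type*} [Fintype ι] [Fintype κ] [DecidableEq ι] [DecidableEq κ]
    {A : Matrix κ κ ℝ} (hA : A.PosDef) (f : ι → κ) (hf : Function.Injective f) :
    (A.submatrix f f).PosDef := by
  classical
  have hs : ∀ p q, A p q = A q p := by
    intro p q
    have h := congrFun (congrFun hA.1 p) q
    simpa [Matrix.conjTranspose_apply] using h.symm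
  rw [Matrix.posDef_iff_dotProduct_mulVec]
  constructor
  · ext i j
    simp only [Matrix.conjTranspose_apply, Matrix.submatrix_apply, star_trivial]
    exact hs _ _
  · intro x hx
    set y : κ → ℝ := fun q => ∑ i, if f i = q then x i else 0 with hy
    have hyf : ∀ i, y (f i) = x i := by
      intro i
      simp only [hy, hf.eq_iff]
      simp [Finset.sum_ite_eq']
    have key : ∀ g : κ → ℝ, ∑ q, y q * g q = ∑ i, x i * g (f i) := by
      intro g
      simp only [hy, Finset.sum_mul]
      rw [Finset.sum_comm]
      refine Finset.sum_congr rfl fun i _ => ?_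
      simp [ite_mul, Finset.sum_ite_eq]
    have key2 : ∀ g : κ → ℝ, ∑ q, g q * y q = ∑ i, g (f i) * x i := by
      intro g
      have := key g
      simpa [mul_comm] using this
    have hyne : y ≠ 0 := by
      obtain ⟨i, hi⟩ := Function.ne_iff.mp hx
      intro h0
      exact hi (by rw [← hyf i, h0]; rfl)
    have heq : star x ⬝ᵥ (A.submatrix f f) *ᵥ x = star y ⬝ᵥ A *ᵥ y := by
      simp only [dotProduct, mulVec, dotProduct, Matrix.submatrix_apply, Pi.star_apply,
        star_trivial]
      rw [key]
      refine Finset.sum_congr rfl fun i _ => ?_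
      congr 1
      exact (key2 fun q => A (f i) q).symm
    rw [heq]
    exact hA.dotProduct_mulVec_pos hyne
open Matrix

/-- The Schur complement of a positive definite block matrix is positive definite. -/
lemma posDef_schur {μ ν : Type*} [Fintype μ] [DecidableEq μ] [Fintype ν] [DecidableEq ν]
    {M : Matrix μ μ ℝ} (B : Matrix μ ν ℝ) (D : Matrix ν ν ℝ) (hM : M.PosDef)
    (h : (fromBlocks M B Bᴴ D).PosDef) : (D - Bᴴ * M⁻¹ * B).PosDef := by
  classical
  haveI : Invertible M := hM.isUnit.invertible
  refine Matrix.posDef_iff_dotProduct_mulVec.mpr ⟨?_, ?_⟩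
  · exact (Matrix.IsHermitian.fromBlocks₁₁ _ _ hM.1).mp h.1 
  · intro x hx
    have hne : (-((M⁻¹ * B) *ᵥ x) ⊕ᵥ x) ≠ 0 := by
      intro h0
      apply hx
      funext i
      exact congrFun h0 (Sum.inr i)
    have hpos := h.dotProduct_mulVec_pos hne
    rw [dotProduct_mulVec, schur_complement_eq₁₁ B D _ _ hM.1, neg_add_cancel, dotProduct_zero,
      zero_add] at hpos
    rw [dotProduct_mulVec]
    exact hpos
open Matrix

/-- Expansion of a sum against a sparse row. -/
lemma row_expand' {n : ℕ} {m : Fin n → ℕ} (F : Matrix (BIdx m) (BIdx m) ℝ) (k : Fin n)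
    (S : Finset (Fin n)) (hk : k ∈ S) (hFkk : blk F k k = 1)
    (hF0 : ∀ q : BIdx m, q.1 ≠ k → q.1 ∉ S → ∀ a, F ⟨k, a⟩ q = 0)
    (g : BIdx m → ℝ) (a : Fin (m k)) :
    ∑ q : BIdx m, F ⟨k, a⟩ q * g q
      = g ⟨k, a⟩ + ∑ q : {q : BIdx m // q.1 ∈ S.erase k}, F ⟨k, a⟩ q.val * g q.val := by
  classical
  have hdiag : ∀ b : Fin (m k), F ⟨k, a⟩ ⟨k, b⟩ = if a = b then 1 else 0 := by
    intro b
    have h := congrFun (congrFun hFkk a) b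
    simpa [blk, Matrix.one_apply] using h
  have hmem : ∀ q : BIdx m, q ∈ (S.erase k).sigma (fun _ => Finset.univ) ↔ q.1 ∈ S.erase k := by
    rintro ⟨i, b⟩; simp [Finset.mem_sigma]
  rw [← Finset.univ_sigma_univ, Finset.sum_sigma]
  have hsub : insert k (S.erase k) ⊆ (Finset.univ : Finset (Fin n)) := Finset.subset_univ _
  have hvan : ∀ i ∈ (Finset.univ : Finset (Fin n)), i ∉ insert k (S.erase k) →
      (∑ b : Fin (m i), F ⟨k, a⟩ ⟨i, b⟩ * g ⟨i, b⟩) = 0 := by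
    intro i _ hi
    have hik : i ≠ k := fun h => hi (h ▸ Finset.mem_insert_self _ _)
    have hiS : i ∉ S := fun h =>
      hi (Finset.mem_insert_of_mem (Finset.mem_erase.mpr ⟨hik, h⟩))
    exact Finset.sum_eq_zero fun b _ => by rw [hF0 ⟨i, b⟩ hik hiS a, zero_mul]
  rw [← Finset.sum_subset hsub hvan, Finset.sum_insert (Finset.notMem_erase k S)]
  congr 1
  · simp only [hdiag, ite_mul, one_mul, zero_mul, Finset.sum_ite_eq, Finset.mem_univ, if_true]
  · rw [← Finset.sum_subtype _ hmem (fun q => F ⟨k, a⟩ q * g q), Finset.sum_sigma]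

/-- Facts about the `k`-th block row of a matrix `F` with an FSAI-type row. -/
lemma fsai_row {n : ℕ} {m : Fin n → ℕ} (A F : Matrix (BIdx m) (BIdx m) ℝ) (hA : A.PosDef)
    (S : Finset (Fin n)) (k : Fin n) (hk : k ∈ S) (hFkk : blk F k k = 1)
    (hF0 : ∀ q : BIdx m, q.1 ≠ k → q.1 ∉ S → ∀ a, F ⟨k, a⟩ q = 0)
    (hFrow : rowM F k (S.erase k) =
      -(rowM A k (S.erase k)) * (subM A (S.erase k) (S.erase k))⁻¹) :
    (∀ j, blk (F * A) k j = blk A k j -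
        rowM A k (S.erase k) * (subM A (S.erase k) (S.erase k))⁻¹ * colM A (S.erase k) j) ∧
      blk (F * A * Fᵀ) k k = blk (F * A) k k := by
  classical
  set T := S.erase k with hT
  have hMpos : (subM A T T).PosDef := by
    have : subM A T T = A.submatrix (Subtype.val) (Subtype.val) := rfl
    rw [this]
    exact posDef_submatrix_inj hA _ Subtype.val_injective
  have hMdet : IsUnit (subM A T T).det := isUnit_iff_ne_zero.mpr hMpos.det_pos.ne'
  have hNM : (subM A T T)⁻¹ * subM A T T = 1 := Matrix.nonsing_inv_mul _ hMdet
  have hFXM : rowM F k T * subM A T T = -(rowM A k T) := by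
    rw [hFrow, Matrix.neg_mul, Matrix.neg_mul, Matrix.mul_assoc, hNM, Matrix.mul_one]
  -- the entries of (F*A) on the pattern T vanish
  have hrow0 : ∀ (a : Fin (m k)) (q : {q : BIdx m // q.1 ∈ T}), (F * A) ⟨k, a⟩ q.val = 0 := by
    intro a q
    rw [Matrix.mul_apply, row_expand' F k S hk hFkk hF0 (fun p => A p q.val) a]
    have hsum : ∑ p : {p : BIdx m // p.1 ∈ T}, F ⟨k, a⟩ p.val * A p.val q.val
        = (rowM F k T * subM A T T) a q := by
      rw [Matrix.mul_apply]; rfl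
    rw [hsum, hFXM]
    simp [rowM, Matrix.neg_apply]
  constructor
  · intro j
    have hblk : blk (F * A) k j = blk A k j + rowM F k T * colM A T j := by
      ext a b
      show (F * A) ⟨k, a⟩ ⟨j, b⟩ = _
      rw [Matrix.mul_apply, row_expand' F k S hk hFkk hF0 (fun p => A p ⟨j, b⟩) a]
      have hsum : ∑ p : {p : BIdx m // p.1 ∈ T}, F ⟨k, a⟩ p.val * A p.val ⟨j, b⟩
          = (rowM F k T * colM A T j) a b := by
        rw [Matrix.mul_apply]; rfl
      rw [hsum]; rfl
    rw [hblk, hFrow, Matrix.neg_mul, Matrix.neg_mul, sub_eq_add_neg, Matrix.mul_assoc]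
  · ext a b
    show (F * A * Fᵀ) ⟨k, a⟩ ⟨k, b⟩ = (F * A) ⟨k, a⟩ ⟨k, b⟩
    rw [Matrix.mul_apply]
    have hcomm : ∀ q ∈ (Finset.univ : Finset (BIdx m)),
        (F * A) ⟨k, a⟩ q * Fᵀ q ⟨k, b⟩ = F ⟨k, b⟩ q * (F * A) ⟨k, a⟩ q := fun q _ => by
      rw [Matrix.transpose_apply, mul_comm]
    rw [Finset.sum_congr rfl hcomm,
      row_expand' F k S hk hFkk hF0 (fun q => (F * A) ⟨k, a⟩ q) b]
    simp [hrow0 a]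

/-- Splitting the indices of `insert c T` as those of `T` plus the block `c`. -/
def insertEquiv {n : ℕ} {m : Fin n → ℕ} (T : Finset (Fin n)) (c : Fin n) (hc : c ∉ T) :
    ({p : BIdx m // p.1 ∈ T} ⊕ Fin (m c)) ≃ {p : BIdx m // p.1 ∈ insert c T} where
  toFun := Sum.elim (fun p => ⟨p.1, Finset.mem_insert_of_mem p.2⟩)
    (fun x => ⟨⟨c, x⟩, Finset.mem_insert_self c T⟩)
  invFun q := if h : q.1.1 ∈ T then Sum.inl ⟨q.1, h⟩ else
    Sum.inr (Fin.cast (congrArg m ((Finset.mem_insert.mp q.2).resolve_right h)) q.1.2)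
  left_inv := by
    rintro (⟨p, hp⟩ | x)
    · simp [hp]
    · simp [hc, Fin.ext_iff]
  right_inv := by
    rintro ⟨⟨i, b⟩, hq⟩
    by_cases h : i ∈ T
    · simp [h]
    · have hic : i = c := (Finset.mem_insert.mp hq).resolve_right h
      subst hic
      simp [h, Fin.ext_iff]

/-- The Schur-complement quotient identity for bordered submatrices. -/
lemma quotient_identity {n : ℕ} {m : Fin n → ℕ} (A : Matrix (BIdx m) (BIdx m) ℝ)
    (hA : A.PosDef) (T : Finset (Fin n)) (k c : Fin n) (hc : c ∉ T) :
    rowM A k (insert c T) * (subM A (insert c T) (insert c T))⁻¹ * colM A (insert c T) k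
      = rowM A k T * (subM A T T)⁻¹ * colM A T k +
        (blk A k c - rowM A k T * (subM A T T)⁻¹ * colM A T c) *
          (blk A c c - rowM A c T * (subM A T T)⁻¹ * colM A T c)⁻¹ *
          (blk A c k - rowM A c T * (subM A T T)⁻¹ * colM A T k) := by
  classical
  have hs : ∀ p q, A p q = A q p := by
    intro p q
    have h := congrFun (congrFun hA.1 p) q
    simpa [Matrix.conjTranspose_apply] using h.symm
  set e := insertEquiv (m := m) T c hc with he
  set M := subM A T T with hM
  set N := (subM A T T)⁻¹ with hN
  set B := colM A T c with hB
  set Bt := rowM A c T with hBt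
  set D := blk A c c with hD
  set Wi := (D - Bt * N * B)⁻¹ with hWi
  -- positive definiteness facts
  have hMpos : M.PosDef := by
    have : M = A.submatrix (Subtype.val) (Subtype.val) := rfl
    rw [this]; exact posDef_submatrix_inj hA _ Subtype.val_injective
  have hMdet : IsUnit M.det := isUnit_iff_ne_zero.mpr hMpos.det_pos.ne'
  have hMN : M * N = 1 := Matrix.mul_nonsing_inv _ hMdet
  have hNM : N * M = 1 := Matrix.nonsing_inv_mul _ hMdet
  have hsub' : (subM A (insert c T) (insert c T)).PosDef := by
    have : subM A (insert c T) (insert c T) = A.submatrix (Subtype.val) (Subtype.val) := rfl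
    rw [this]; exact posDef_submatrix_inj hA _ Subtype.val_injective
  have hR : (subM A (insert c T) (insert c T)).submatrix ⇑e ⇑e = fromBlocks M B Bt D := by
    ext s t
    cases s <;> cases t <;> rfl
  have hRpos : (fromBlocks M B Bt D).PosDef := by
    rw [← hR]; exact posDef_submatrix_inj hsub' _ e.injective
  have hBtH : Bt = Bᴴ := by
    ext x p
    simp only [hBt, hB, Matrix.conjTranspose_apply, rowM, colM, star_trivial]
    exact hs _ _
  have hWpos : (D - Bt * N * B).PosDef := by
    rw [hBtH, hN]
    refine posDef_schur B D hMpos ?_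
    rw [← hBtH]; exact hRpos
  have hWdet : IsUnit (D - Bt * N * B).det := isUnit_iff_ne_zero.mpr hWpos.det_pos.ne'
  have hWWi : (D - Bt * N * B) * Wi = 1 := Matrix.mul_nonsing_inv _ hWdet
  have hBtNB : Bt * N * B = D - (D - Bt * N * B) := by abel
  -- the explicit inverse of the bordered matrix
  set Ri := fromBlocks (N + N * B * Wi * Bt * N) (-(N * B * Wi)) (-(Wi * Bt * N)) Wi with hRi
  have hRinv : (fromBlocks M B Bt D)⁻¹ = Ri := by
    apply Matrix.inv_eq_right_inv
    rw [hRi, fromBlocks_multiply]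
    have h11 : M * (N + N * B * Wi * Bt * N) + B * -(Wi * Bt * N) = 1 := by
      simp only [Matrix.mul_add, Matrix.mul_neg, ← Matrix.mul_assoc, hMN, Matrix.one_mul]
      abel
    have h12 : M * -(N * B * Wi) + B * Wi = 0 := by
      simp only [Matrix.mul_neg, ← Matrix.mul_assoc, hMN, Matrix.one_mul]
      abel
    have h21 : Bt * (N + N * B * Wi * Bt * N) + D * -(Wi * Bt * N) = 0 := by
      simp only [Matrix.mul_add, Matrix.mul_neg, ← Matrix.mul_assoc]
      rw [hBtNB, Matrix.sub_mul, hWWi, Matrix.sub_mul, Matrix.sub_mul, Matrix.one_mul]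
      abel
    have h22 : Bt * -(N * B * Wi) + D * Wi = 1 := by
      simp only [Matrix.mul_neg, ← Matrix.mul_assoc]
      rw [hBtNB, Matrix.sub_mul, hWWi]
      abel
    rw [h11, h12, h21, h22, fromBlocks_one]
  -- reindex the bordered product
  have h1 : (subM A (insert c T) (insert c T))⁻¹.submatrix ⇑e ⇑e = Ri := by
    rw [← Matrix.inv_submatrix_equiv, hR, hRinv]
  have hrowe : (rowM A k (insert c T)).submatrix id ⇑e = fromCols (rowM A k T) (blk A k c) := by
    ext a s
    cases s <;> rfl
  have hcole : (colM A (insert c T) k).submatrix ⇑e id = fromRows (colM A T k) (blk A c k) := by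
    ext s a
    cases s <;> rfl
  have hprod : rowM A k (insert c T) * (subM A (insert c T) (insert c T))⁻¹ *
      colM A (insert c T) k
      = fromCols (rowM A k T) (blk A k c) * Ri * fromRows (colM A T k) (blk A c k) := by
    rw [← hrowe, ← h1, ← hcole, Matrix.submatrix_mul_equiv, Matrix.submatrix_mul_equiv,
      Matrix.submatrix_id_id]
  rw [hprod, hRi, fromCols_mul_fromBlocks, fromCols_mul_fromRows]
  simp only [Matrix.mul_add, Matrix.add_mul, Matrix.mul_sub, Matrix.sub_mul, Matrix.mul_neg,
    Matrix.neg_mul, ← Matrix.mul_assoc]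
  abel

/-- (Adaptive FSAI update) If `F` is the FSAI matrix for the pattern `P` and `F'` the FSAI
matrix for the enlarged pattern `P ∪ {(k,c)}` (with `c < k`, `c ∉ Pₖ`), then writing
`W_c = A_{cc} - A[{c},𝒫̃ₖ] A[𝒫̃ₖ,𝒫̃ₖ]⁻¹ A[𝒫̃ₖ,{c}]`, one has
`(F' A F'ᵀ)_{kk} = (F A Fᵀ)_{kk} - (FA)_{kc} W_c⁻¹ (FA)_{kc}ᵀ`. -/
theorem fsai_adaptive_update {n : ℕ} {m : Fin n → ℕ}
    (A F F' : Matrix (BIdx m) (BIdx m) ℝ) (P : Fin n → Finset (Fin n))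
    (hA : A.PosDef) (hP : IsLowerPattern P)
    (k c : Fin n) (hck : c < k) (hcP : c ∉ P k)
    (hF : IsFSAI A F P)
    (hF' : IsFSAI A F' (Function.update P k (insert c (P k)))) :
    blk (F' * A * F'ᵀ) k k =
      blk (F * A * Fᵀ) k k -
        blk (F * A) k c *
          (blk A c c - rowM A c ((P k).erase k) *
              (subM A ((P k).erase k) ((P k).erase k))⁻¹ * colM A ((P k).erase k) c)⁻¹ *
          (blk (F * A) k c)ᵀ := by
  classical
  obtain ⟨hFkk, hF0, hFrow⟩ := hF
  obtain ⟨hF'kk, hF'0, hF'row⟩ := hF'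
  have hs : ∀ p q, A p q = A q p := by
    intro p q
    have h := congrFun (congrFun hA.1 p) q
    simpa [Matrix.conjTranspose_apply] using h.symm
  have hkS : k ∈ P k := hP.1 k
  have hck' : c ≠ k := ne_of_lt hck
  have hcT : c ∉ (P k).erase k := fun h => hcP (Finset.mem_of_mem_erase h)
  have hkS' : k ∈ insert c (P k) := Finset.mem_insert_of_mem hkS
  have hT' : (insert c (P k)).erase k = insert c ((P k).erase k) :=
    Finset.erase_insert_of_ne hck'
  have hupd : Function.update P k (insert c (P k)) k = insert c (P k) :=
    Function.update_self _ _ _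
  -- F facts
  obtain ⟨hFA, hFAF⟩ := fsai_row A F hA (P k) k hkS (hFkk k)
    (fun q h1 h2 a => hF0 ⟨k, a⟩ q (Ne.symm h1) h2) (hFrow k)
  -- F' facts
  have hF'rowk := hF'row k
  rw [hupd] at hF'rowk
  obtain ⟨hF'A, hF'AF⟩ := fsai_row A F' hA (insert c (P k)) k hkS' (hF'kk k)
    (fun q h1 h2 a => hF'0 ⟨k, a⟩ q (Ne.symm h1) (by rw [hupd]; exact h2)) hF'rowk
  -- transpose/symmetry facts
  have h1 : (blk A k c)ᵀ = blk A c k := by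
    ext a b; exact hs _ _
  have h2 : (colM A ((P k).erase k) c)ᵀ = rowM A c ((P k).erase k) := by
    ext a b; exact hs _ _
  have h3 : (rowM A k ((P k).erase k))ᵀ = colM A ((P k).erase k) k := by
    ext a b; exact hs _ _
  have hMsym : (subM A ((P k).erase k) ((P k).erase k))ᵀ = subM A ((P k).erase k) ((P k).erase k) := by
    ext p q; exact hs _ _
  have h4 : ((subM A ((P k).erase k) ((P k).erase k))⁻¹)ᵀ =
      (subM A ((P k).erase k) ((P k).erase k))⁻¹ := by
    rw [Matrix.transpose_nonsing_inv, hMsym]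
  have htrans : (blk A k c - rowM A k ((P k).erase k) *
      (subM A ((P k).erase k) ((P k).erase k))⁻¹ * colM A ((P k).erase k) c)ᵀ
      = blk A c k - rowM A c ((P k).erase k) *
          (subM A ((P k).erase k) ((P k).erase k))⁻¹ * colM A ((P k).erase k) k := by
    rw [Matrix.transpose_sub, h1, Matrix.transpose_mul, Matrix.transpose_mul, h2, h3, h4,
      Matrix.mul_assoc]
  rw [hFAF, hF'AF, hF'A k, hT',
    quotient_identity A hA ((P k).erase k) k c hcT, hFA k, hFA c, htrans,
    sub_add_eq_sub_sub]
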